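/- Let γ be irrational with convergents p_n/q_n. If p/q is a rational number (q ∈ ℕ) lying strictly between p_{n-1}/q_{n-1} and p_{n+1}/q_{n+1}, then q|qγ - p| > 1/c_{n+1}, where c_{n+1} is the (n+1)-st partial quotient of γ. -/

import Mathlib

/-- Numerator of the `n`-th convergent of the continued fraction with
partial quotients `c`. -/
def convP (c : ℕ → ℤ) : ℕ → ℤ
  | 0 => c 0
  | 1 => c 1 * c 0 + 1
  | (n + 2) => c (n + 2) * convP c (n + 1) + convP c n

/-- Denominator of the `n`-th convergent of the continued fraction with
partial quotients `c`. -/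
def convQ (c : ℕ → ℤ) : ℕ → ℤ
  | 0 => 1
  | 1 => c 1
  | (n + 2) => c (n + 2) * convQ c (n + 1) + convQ c n

/-- `γ` has (infinite) continued fraction expansion `[c 0; c 1, c 2, ...]`:
all partial quotients with positive index are positive integers, and the
convergents tend to `γ`. -/
def IsCF (γ : ℝ) (c : ℕ → ℤ) : Prop :=
  (∀ n, 1 ≤ n → 1 ≤ c n) ∧
  Filter.Tendsto (fun n => (convP c n : ℝ) / (convQ c n : ℝ)) Filter.atTop (nhds γ)

lemma convQ_pos (c : ℕ → ℤ) (hc : ∀ n, 1 ≤ n → 1 ≤ c n) : ∀ n, 0 < convQ c n := by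
  intro n
  induction n using Nat.strong_induction_on with
  | _ n ih =>
    match n with
    | 0 => simp [convQ]
    | 1 => have := hc 1 le_rfl; simp only [convQ]; omega
    | (k+2) =>
      have h1 := ih (k+1) (by omega)
      have h0 := ih k (by omega)
      have hck := hc (k+2) (by omega)
      simp only [convQ]
      nlinarith

lemma convDet (c : ℕ → ℤ) :
    ∀ n, convP c (n+1) * convQ c n - convP c n * convQ c (n+1) = (-1)^n := by
  intro n
  induction n with
  | zero => simp [convP, convQ]; ring
  | succ k ih =>
    show convP c (k+2) * convQ c (k+1) - convP c (k+1) * convQ c (k+2) = _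
    simp only [convP, convQ]
    linear_combination -ih

lemma convDet2 (c : ℕ → ℤ) (n : ℕ) :
    convP c (n+2) * convQ c n - convP c n * convQ c (n+2) = c (n+2) * (-1)^n := by
  have := convDet c n
  simp only [convP, convQ]
  linear_combination c (n+2) * this

/-- real difference of convergents two apart -/
lemma convStep2 (c : ℕ → ℤ) (hc : ∀ n, 1 ≤ n → 1 ≤ c n) (n : ℕ) :
    (convP c (n+2) : ℝ) / (convQ c (n+2)) - (convP c n : ℝ) / (convQ c n)
      = (c (n+2) : ℝ) * (-1)^n / ((convQ c n : ℝ) * (convQ c (n+2))) := by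
  have h0 : (0:ℝ) < (convQ c n : ℝ) := by exact_mod_cast convQ_pos c hc n
  have h2 : (0:ℝ) < (convQ c (n+2) : ℝ) := by exact_mod_cast convQ_pos c hc (n+2)
  have hd : (convP c (n+2) : ℝ) * (convQ c n : ℝ) - (convP c n : ℝ) * (convQ c (n+2) : ℝ)
      = (c (n+2) : ℝ) * (-1)^n := by exact_mod_cast convDet2 c n
  field_simp
  linear_combination hd

lemma irr_ne_ratio (γ : ℝ) (hγ : Irrational γ) (P Q : ℤ) : γ ≠ (P : ℝ) / (Q : ℝ) := by
  intro h
  exact hγ ⟨(P : ℚ)/(Q : ℚ), by rw [h]; push_cast; ring⟩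

lemma gamma_between (γ : ℝ) (hγ : Irrational γ) (c : ℕ → ℤ) (hcf : IsCF γ c) (k : ℕ) :
    (convP c (2*k) : ℝ) / (convQ c (2*k)) < γ ∧
      γ < (convP c (2*k+1) : ℝ) / (convQ c (2*k+1)) := by
  obtain ⟨hc, htend⟩ := hcf
  set X : ℕ → ℝ := fun n => (convP c n : ℝ) / (convQ c n) with hX
  have hQpos : ∀ n, (0:ℝ) < (convQ c n : ℝ) := fun n => by exact_mod_cast convQ_pos c hc n
  have hstep : ∀ n, 0 ≤ (-1:ℝ)^n * (X (n+2) - X n) := by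
    intro n
    have hcpos : (1:ℝ) ≤ (c (n+2) : ℝ) := by exact_mod_cast hc (n+2) (by omega)
    have hD := mul_pos (hQpos n) (hQpos (n+2))
    have hfrac : (0:ℝ) ≤ (c (n+2):ℝ)/((convQ c n:ℝ)*(convQ c (n+2))) :=
      div_nonneg (by linarith) hD.le
    have hs := convStep2 c hc n
    simp only [hX]
    rcases Nat.even_or_odd n with he | ho
    · rw [he.neg_one_pow] at hs ⊢
      rw [hs, one_mul, mul_one]
      exact hfrac
    · rw [ho.neg_one_pow] at hs ⊢
      rw [hs, show (-1:ℝ) * ((c (n+2):ℝ) * -1 / ((convQ c n:ℝ) * (convQ c (n+2))))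
        = (c (n+2):ℝ) / ((convQ c n:ℝ) * (convQ c (n+2))) from by ring]
      exact hfrac
  have hmonoE : Monotone (fun j => X (2*j)) := by
    apply monotone_nat_of_le_succ
    intro j
    have := hstep (2*j)
    have h1 : ((-1:ℝ))^(2*j) = 1 := (even_two_mul j).neg_one_pow
    rw [h1, one_mul] at this
    have : X (2*j) ≤ X (2*j+2) := by linarith
    simpa [Nat.mul_succ] using this
  have hantiO : Antitone (fun j => X (2*j+1)) := by
    apply antitone_nat_of_succ_le
    intro j
    have := hstep (2*j+1)
    have h1 : ((-1:ℝ))^(2*j+1) = -1 := (Odd.neg_one_pow ⟨j, by ring⟩)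
    rw [h1] at this
    have : X (2*j+1+2) ≤ X (2*j+1) := by linarith
    simpa [Nat.mul_succ] using this
  have h2k : Filter.Tendsto (fun j : ℕ => 2*j) Filter.atTop Filter.atTop :=
    Filter.tendsto_atTop_atTop.mpr fun b => ⟨b, fun a ha => by omega⟩
  have h2k1 : Filter.Tendsto (fun j : ℕ => 2*j+1) Filter.atTop Filter.atTop :=
    Filter.tendsto_atTop_atTop.mpr fun b => ⟨b, fun a ha => by omega⟩
  have htE : Filter.Tendsto (fun j => X (2*j)) Filter.atTop (nhds γ) := htend.comp h2k
  have htO : Filter.Tendsto (fun j => X (2*j+1)) Filter.atTop (nhds γ) := htend.comp h2k1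
  constructor
  · have hle : X (2*k) ≤ γ :=
      ge_of_tendsto htE (Filter.eventually_atTop.mpr ⟨k, fun j hj => hmonoE hj⟩)
    exact lt_of_le_of_ne hle (Ne.symm (irr_ne_ratio γ hγ _ _))
  · have hle : γ ≤ X (2*k+1) :=
      le_of_tendsto htO (Filter.eventually_atTop.mpr ⟨k, fun j hj => hantiO hj⟩)
    exact lt_of_le_of_ne hle (irr_ne_ratio γ hγ _ _)

/-- gap between distinct rationals with positive denominators -/
lemma frac_gap (a b pp qq : ℤ) (hb : (0:ℤ) < b) (hq : (0:ℤ) < qq)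
    (h : (pp:ℝ)/(qq:ℝ) < (a:ℝ)/(b:ℝ)) :
    1/((qq:ℝ)*(b:ℝ)) ≤ (a:ℝ)/(b:ℝ) - (pp:ℝ)/(qq:ℝ) := by
  have hbR : (0:ℝ) < (b:ℝ) := by exact_mod_cast hb
  have hqR : (0:ℝ) < (qq:ℝ) := by exact_mod_cast hq
  have hint : (pp:ℝ) * b < (a:ℝ) * qq := by
    rw [div_lt_div_iff₀ hqR hbR] at h; exact h
  have hintZ : pp * b < a * qq := by exact_mod_cast hint
  have hint1 : (pp:ℝ) * b + 1 ≤ (a:ℝ) * qq := by exact_mod_cast (by omega : pp * b + 1 ≤ a * qq)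
  have heq : (a:ℝ)/(b:ℝ) - (pp:ℝ)/(qq:ℝ) = ((a:ℝ)*qq - pp*b)/((qq:ℝ)*b) := by
    field_simp
  rw [heq, div_le_div_iff₀ (by positivity) (by positivity)]
  nlinarith [mul_pos hqR hbR]

theorem stmt_12 (γ : ℝ) (hγ : Irrational γ) (c : ℕ → ℤ) (hcf : IsCF γ c)
    (n : ℕ) (hn : 1 ≤ n) (p : ℤ) (q : ℕ) (hq : 0 < q)
    (hbetween :
      ((convP c (n - 1) : ℝ) / (convQ c (n - 1) : ℝ) < (p : ℝ) / (q : ℝ) ∧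
        (p : ℝ) / (q : ℝ) < (convP c (n + 1) : ℝ) / (convQ c (n + 1) : ℝ)) ∨
      ((convP c (n + 1) : ℝ) / (convQ c (n + 1) : ℝ) < (p : ℝ) / (q : ℝ) ∧
        (p : ℝ) / (q : ℝ) < (convP c (n - 1) : ℝ) / (convQ c (n - 1) : ℝ))) :
    (q : ℝ) * |(q : ℝ) * γ - (p : ℝ)| > 1 / (c (n + 1) : ℝ) := by
  have hbet := gamma_between γ hγ c hcf
  obtain ⟨hc, htend⟩ := hcf
  obtain ⟨m, rfl⟩ : ∃ m, n = m + 1 := ⟨n-1, by omega⟩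
  simp only [Nat.add_sub_cancel, show m+1+1 = m+2 from rfl] at hbetween ⊢
  have hQm : (0:ℝ) < (convQ c m : ℝ) := by exact_mod_cast convQ_pos c hc m
  have hQ2 : (0:ℝ) < (convQ c (m+2) : ℝ) := by exact_mod_cast convQ_pos c hc (m+2)
  have hqR : (0:ℝ) < (q:ℝ) := by exact_mod_cast hq
  have hqZ : (0:ℤ) < (q:ℤ) := by exact_mod_cast hq
  have hcR : (1:ℝ) ≤ (c (m+2) : ℝ) := by exact_mod_cast hc (m+2) (by omega)
  have hstep := convStep2 c hc m
  have hD := mul_pos hQm hQ2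
  have he1 : (q:ℝ)*γ - p = (q:ℝ)*(γ - (p:ℝ)/(q:ℝ)) := by field_simp
  rcases hbetween with ⟨h1, h2⟩ | ⟨h1, h2⟩
  · -- X m < p/q < X (m+2), so m is even and X (m+2) < γ
    have hEm : Even m := by
      by_contra hodd
      rw [Nat.not_even_iff_odd] at hodd
      rw [hodd.neg_one_pow] at hstep
      have hneg : (c (m+2):ℝ) * (-1) / ((convQ c m:ℝ)*(convQ c (m+2))) < 0 :=
        div_neg_of_neg_of_pos (by linarith) hD
      linarith
    rw [hEm.neg_one_pow, mul_one] at hstep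
    obtain ⟨k, hk⟩ := hEm
    have hγ2 : (convP c (m+2) : ℝ) / (convQ c (m+2)) < γ := by
      have := (hbet (k+1)).1
      have hidx : 2*(k+1) = m+2 := by omega
      rwa [hidx] at this
    -- gap A : 1/(q * Q (m+2)) ≤ X(m+2) - p/q
    have hA : 1/((q:ℝ)*(convQ c (m+2):ℝ)) ≤
        (convP c (m+2):ℝ)/(convQ c (m+2):ℝ) - (p:ℝ)/(q:ℝ) := by
      have := frac_gap (convP c (m+2)) (convQ c (m+2)) p (q:ℤ)
        (convQ_pos c hc (m+2)) hqZ (by push_cast; exact h2)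
      push_cast at this ⊢
      linarith
    -- gap B : 1/(q * Q m) ≤ p/q - X m
    have hB : 1/((q:ℝ)*(convQ c m:ℝ)) ≤
        (p:ℝ)/(q:ℝ) - (convP c m:ℝ)/(convQ c m:ℝ) := by
      have := frac_gap p (q:ℤ) (convP c m) (convQ c m) hqZ (convQ_pos c hc m)
        (by push_cast; exact h1)
      push_cast at this ⊢
      rw [mul_comm ((convQ c m : ℤ):ℝ) ((q:ℕ):ℝ)] at this
      linarith
    -- deduce Q(m+2) < c(m+2) * q
    have hQlt : (convQ c (m+2):ℝ) < (c (m+2):ℝ) * q := by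
      have hlt : 1/((q:ℝ)*(convQ c m:ℝ)) <
          (c (m+2):ℝ) / ((convQ c m:ℝ)*(convQ c (m+2):ℝ)) := by
        calc 1/((q:ℝ)*(convQ c m:ℝ)) ≤ (p:ℝ)/(q:ℝ) - (convP c m:ℝ)/(convQ c m:ℝ) := hB
          _ < (convP c (m+2):ℝ)/(convQ c (m+2):ℝ) - (convP c m:ℝ)/(convQ c m:ℝ) := by linarith
          _ = _ := hstep
      rw [div_lt_div_iff₀ (by positivity) (by positivity)] at hlt
      nlinarith
    have hpos : 0 < γ - (p:ℝ)/(q:ℝ) := by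
      have := div_pos (by norm_num : (0:ℝ) < 1) (mul_pos hqR hQ2)
      linarith
    rw [he1, abs_of_pos (by positivity)]
    have s1 : (1:ℝ)/((q:ℝ)*(convQ c (m+2):ℝ)) < γ - (p:ℝ)/(q:ℝ) := by linarith
    have s2 : (q:ℝ)*((q:ℝ)*((1:ℝ)/((q:ℝ)*(convQ c (m+2):ℝ)))) = (q:ℝ)/(convQ c (m+2):ℝ) := by
      field_simp
    have s3 : (1:ℝ)/(c (m+2):ℝ) < (q:ℝ)/(convQ c (m+2):ℝ) := by
      rw [div_lt_div_iff₀ (by linarith) hQ2]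
      nlinarith
    calc (1:ℝ)/(c (m+2):ℝ) < (q:ℝ)/(convQ c (m+2):ℝ) := s3
      _ = (q:ℝ)*((q:ℝ)*((1:ℝ)/((q:ℝ)*(convQ c (m+2):ℝ)))) := s2.symm
      _ < (q:ℝ)*((q:ℝ)*(γ - (p:ℝ)/(q:ℝ))) := by
          apply mul_lt_mul_of_pos_left _ hqR
          exact mul_lt_mul_of_pos_left s1 hqR
  · -- X (m+2) < p/q < X m, so m is odd and γ < X (m+2)
    have hOm : Odd m := by
      rw [← Nat.not_even_iff_odd]
      intro heven
      rw [heven.neg_one_pow, mul_one] at hstep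
      have hposf : 0 < (c (m+2):ℝ) / ((convQ c m:ℝ)*(convQ c (m+2))) :=
        div_pos (by linarith) hD
      linarith
    rw [hOm.neg_one_pow] at hstep
    obtain ⟨k, hk⟩ := hOm
    have hγ2 : γ < (convP c (m+2) : ℝ) / (convQ c (m+2)) := by
      have := (hbet (k+1)).2
      have hidx : 2*(k+1)+1 = m+2 := by omega
      rwa [hidx] at this
    have hA : 1/((q:ℝ)*(convQ c (m+2):ℝ)) ≤
        (p:ℝ)/(q:ℝ) - (convP c (m+2):ℝ)/(convQ c (m+2):ℝ) := by
      have := frac_gap p (q:ℤ) (convP c (m+2)) (convQ c (m+2)) hqZ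
        (convQ_pos c hc (m+2)) (by push_cast; exact h1)
      push_cast at this ⊢
      rw [mul_comm ((convQ c (m+2) : ℤ):ℝ) ((q:ℕ):ℝ)] at this
      linarith
    have hB : 1/((q:ℝ)*(convQ c m:ℝ)) ≤
        (convP c m:ℝ)/(convQ c m:ℝ) - (p:ℝ)/(q:ℝ) := by
      have := frac_gap (convP c m) (convQ c m) p (q:ℤ) (convQ_pos c hc m) hqZ
        (by push_cast; exact h2)
      push_cast at this ⊢
      linarith
    have hstep' : (convP c m:ℝ)/(convQ c m:ℝ) - (convP c (m+2):ℝ)/(convQ c (m+2):ℝ)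
        = (c (m+2):ℝ) / ((convQ c m:ℝ)*(convQ c (m+2):ℝ)) := by
      rw [show (c (m+2):ℝ) / ((convQ c m:ℝ)*(convQ c (m+2):ℝ))
        = -((c (m+2):ℝ) * -1 / ((convQ c m:ℝ)*(convQ c (m+2):ℝ))) from by ring, ← hstep]
      ring
    have hQlt : (convQ c (m+2):ℝ) < (c (m+2):ℝ) * q := by
      have hlt : 1/((q:ℝ)*(convQ c m:ℝ)) <
          (c (m+2):ℝ) / ((convQ c m:ℝ)*(convQ c (m+2):ℝ)) := by
        calc 1/((q:ℝ)*(convQ c m:ℝ)) ≤ (convP c m:ℝ)/(convQ c m:ℝ) - (p:ℝ)/(q:ℝ) := hB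
          _ < (convP c m:ℝ)/(convQ c m:ℝ) - (convP c (m+2):ℝ)/(convQ c (m+2):ℝ) := by linarith
          _ = _ := hstep'
      rw [div_lt_div_iff₀ (by positivity) (by positivity)] at hlt
      nlinarith
    have hpos : 0 < (p:ℝ)/(q:ℝ) - γ := by
      have := div_pos (by norm_num : (0:ℝ) < 1) (mul_pos hqR hQ2)
      linarith
    rw [he1, abs_of_neg (by nlinarith)]
    rw [show (q:ℝ) * -((q:ℝ)*(γ - (p:ℝ)/(q:ℝ))) = (q:ℝ)*((q:ℝ)*((p:ℝ)/(q:ℝ) - γ)) from by ring]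
    have s1 : (1:ℝ)/((q:ℝ)*(convQ c (m+2):ℝ)) < (p:ℝ)/(q:ℝ) - γ := by linarith
    have s2 : (q:ℝ)*((q:ℝ)*((1:ℝ)/((q:ℝ)*(convQ c (m+2):ℝ)))) = (q:ℝ)/(convQ c (m+2):ℝ) := by
      field_simp
    have s3 : (1:ℝ)/(c (m+2):ℝ) < (q:ℝ)/(convQ c (m+2):ℝ) := by
      rw [div_lt_div_iff₀ (by linarith) hQ2]
      nlinarith
    calc (1:ℝ)/(c (m+2):ℝ) < (q:ℝ)/(convQ c (m+2):ℝ) := s3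
      _ = (q:ℝ)*((q:ℝ)*((1:ℝ)/((q:ℝ)*(convQ c (m+2):ℝ)))) := s2.symm
      _ < (q:ℝ)*((q:ℝ)*((p:ℝ)/(q:ℝ) - γ)) := by
          apply mul_lt_mul_of_pos_left _ hqR
          exact mul_lt_mul_of_pos_left s1 hqR
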